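/- Let X = (0, 0, 1) be the target state and P = (p1, p2, p3) ∈ ℝ³ an adjoint vector with reduced adjoint P̃ = P − (P·X) X ≠ 0. If the switching function Φ = p3 x2 − p2 x3 vanishes at this point (i.e. p2 = 0), then Φ̇ = Δ(x1 p3 − x3 p1) = −Δ p1 is nonzero. Consequently, any extremal with P̃(T) ≠ 0 reaching the target (0,0,1) at time T with Φ(T) = 0 has Φ of constant nonzero sign, hence constant bang control, on some interval [T − ε, T). -/

import Mathlib

open Set

/-- At the target X(T) = (0, 0, 1), if the reduced adjoint
P̃(T) = P(T) − (P(T)·X(T)) X(T) is nonzero and the switching function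
Φ(T) = p3 x2 − p2 x3 vanishes there (i.e. p2(T) = 0), then
Φ̇(T) = Δ(x1 p3 − x3 p1)(T) = −Δ p1(T) ≠ 0.  Consequently, any extremal satisfying the
maximization condition and reaching the target at time T with Φ(T) = 0 and P̃(T) ≠ 0 has
Φ of constant nonzero sign — hence constant bang control — on some interval [T − ε, T). -/
theorem final_arc_is_bang_when_reduced_adjoint_nonzero
    (Δ : ℝ) (hΔ : Δ ≠ 0) (T ε0 : ℝ) (hε0 : 0 < ε0)
    (u x1 x2 x3 p1 p2 p3 : ℝ → ℝ)
    (hx1 : ∀ t ∈ Icc (T - ε0) T, HasDerivWithinAt x1 (-Δ * x2 t) (Icc (T - ε0) T) t)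
    (hx2 : ∀ t ∈ Icc (T - ε0) T, HasDerivWithinAt x2 (Δ * x1 t - u t * x3 t) (Icc (T - ε0) T) t)
    (hx3 : ∀ t ∈ Icc (T - ε0) T, HasDerivWithinAt x3 (u t * x2 t) (Icc (T - ε0) T) t)
    (hp1 : ∀ t ∈ Icc (T - ε0) T, HasDerivWithinAt p1 (-Δ * p2 t + x1 t) (Icc (T - ε0) T) t)
    (hp2 : ∀ t ∈ Icc (T - ε0) T, HasDerivWithinAt p2 (Δ * p1 t - u t * p3 t) (Icc (T - ε0) T) t)
    (hp3 : ∀ t ∈ Icc (T - ε0) T, HasDerivWithinAt p3 (u t * p2 t) (Icc (T - ε0) T) t)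
    (hXT : x1 T = 0 ∧ x2 T = 0 ∧ x3 T = 1)
    (hΦT : p3 T * x2 T - p2 T * x3 T = 0)
    (hPtilde : ¬(p1 T - (p1 T * x1 T + p2 T * x2 T + p3 T * x3 T) * x1 T = 0 ∧
                 p2 T - (p1 T * x1 T + p2 T * x2 T + p3 T * x3 T) * x2 T = 0 ∧
                 p3 T - (p1 T * x1 T + p2 T * x2 T + p3 T * x3 T) * x3 T = 0))
    (hmax : ∀ t ∈ Icc (T - ε0) T, p3 t * x2 t - p2 t * x3 t ≠ 0 →
      u t = Real.sign (p3 t * x2 t - p2 t * x3 t)) :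
    Δ * (x1 T * p3 T - x3 T * p1 T) = -Δ * p1 T ∧
    -Δ * p1 T ≠ 0 ∧
    ∃ ε : ℝ, 0 < ε ∧ ε ≤ ε0 ∧
      ((∀ t ∈ Ico (T - ε) T, 0 < p3 t * x2 t - p2 t * x3 t ∧ u t = 1) ∨
       (∀ t ∈ Ico (T - ε) T, p3 t * x2 t - p2 t * x3 t < 0 ∧ u t = -1)) := by

  obtain ⟨hX1, hX2, hX3⟩ := hXT
  have hp2T : p2 T = 0 := by rw [hX2, hX3] at hΦT; linarith
  have hp1T : p1 T ≠ 0 := by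
    intro h; exact hPtilde (by rw [hX1, hX2, hX3, hp2T, h]; norm_num)
  have hgT : -Δ * p1 T ≠ 0 := mul_ne_zero (neg_ne_zero.mpr hΔ) hp1T
  refine ⟨by rw [hX1, hX3]; ring, hgT, ?_⟩
  set I0 : Set ℝ := Icc (T - ε0) T with hI0
  set Φ : ℝ → ℝ := fun t => p3 t * x2 t - p2 t * x3 t with hΦdef
  set g : ℝ → ℝ := fun t => Δ * (x1 t * p3 t - x3 t * p1 t) with hgdef
  have hΦT0 : Φ T = 0 := hΦT
  have hΦ' : ∀ t ∈ I0, HasDerivWithinAt Φ (g t) I0 t := by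
    intro t ht
    have h := ((hp3 t ht).mul (hx2 t ht)).sub ((hp2 t ht).mul (hx3 t ht))
    exact h.congr_deriv (by show _ = Δ * (x1 t * p3 t - x3 t * p1 t); ring)
  have hTmem : T ∈ I0 := ⟨by linarith, le_refl T⟩
  have hcont : ContinuousOn g I0 := by
    apply continuousOn_const.mul
    apply ContinuousOn.sub
    · exact ContinuousOn.mul (fun t ht => (hx1 t ht).continuousWithinAt)
        (fun t ht => (hp3 t ht).continuousWithinAt)
    · exact ContinuousOn.mul (fun t ht => (hx3 t ht).continuousWithinAt)
        (fun t ht => (hp1 t ht).continuousWithinAt)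
  have hgTval : g T = -Δ * p1 T := by simp only [hgdef, hX1, hX3]; ring
  have hgTne : g T ≠ 0 := by rw [hgTval]; exact hgT
  have hev : {t | |g t - g T| < |g T|} ∈ nhdsWithin T I0 := by
    have : Metric.ball (g T) |g T| ∈ nhds (g T) :=
      Metric.ball_mem_nhds _ (abs_pos.mpr hgTne)
    have h2 := hcont T hTmem this
    simpa [Set.preimage, Metric.mem_ball, Real.dist_eq] using h2
  rw [Metric.mem_nhdsWithin_iff] at hev
  obtain ⟨δ, hδ0, hδ⟩ := hev
  set ε := min ε0 (δ / 2) with hεdef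
  have hε0' : 0 < ε := lt_min hε0 (by linarith)
  have hεle : ε ≤ ε0 := min_le_left _ _
  have hεδ : ε < δ := lt_of_le_of_lt (min_le_right _ _) (by linarith)
  have hsub : Icc (T - ε) T ⊆ I0 := Icc_subset_Icc (by linarith) le_rfl
  have hsign : ∀ t ∈ Icc (T - ε) T, |g t - g T| < |g T| := by
    intro t ht
    refine hδ ⟨?_, hsub ht⟩
    rw [Metric.mem_ball, Real.dist_eq, abs_sub_lt_iff]
    obtain ⟨h1, h2⟩ := ht
    constructor <;> linarith
  have hΦcont : ContinuousOn Φ (Icc (T - ε) T) :=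
    fun t ht => ((hΦ' t (hsub ht)).continuousWithinAt).mono hsub
  have hderiv : ∀ x ∈ Ioo (T - ε) T, deriv Φ x = g x := by
    intro x hx
    have hx0 : x ∈ I0 := hsub (Ioo_subset_Icc_self hx)
    have hnh : I0 ∈ nhds x := by
      rw [hI0]
      exact Icc_mem_nhds (by have := hx.1; linarith) hx.2
    exact ((hΦ' x hx0).hasDerivAt hnh).deriv
  have hTmem' : T ∈ Icc (T - ε) T := ⟨by linarith, le_rfl⟩
  rcases hgTne.lt_or_gt with hneg | hpos
  · -- g T < 0 : Φ strictly decreasing, Φ t > 0 before T, u = 1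
    have hanti : StrictAntiOn Φ (Icc (T - ε) T) := by
      apply strictAntiOn_of_deriv_neg (convex_Icc _ _) hΦcont
      intro x hx
      rw [interior_Icc] at hx
      rw [hderiv x hx]
      have h1 := hsign x (Ioo_subset_Icc_self hx)
      rw [abs_of_neg hneg, abs_sub_lt_iff] at h1
      linarith [h1.2]
    refine ⟨ε, hε0', hεle, Or.inl ?_⟩
    intro t ht
    have htI : t ∈ Icc (T - ε) T := Ico_subset_Icc_self ht
    have hΦpos : 0 < Φ t := by
      have := hanti htI hTmem' ht.2
      rwa [hΦT0] at this
    exact ⟨hΦpos, by rw [hmax t (hsub htI) (ne_of_gt hΦpos), Real.sign_of_pos hΦpos]⟩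
  · -- g T > 0 : Φ strictly increasing, Φ t < 0 before T, u = -1
    have hmono : StrictMonoOn Φ (Icc (T - ε) T) := by
      apply strictMonoOn_of_deriv_pos (convex_Icc _ _) hΦcont
      intro x hx
      rw [interior_Icc] at hx
      rw [hderiv x hx]
      have h1 := hsign x (Ioo_subset_Icc_self hx)
      rw [abs_of_pos hpos, abs_sub_lt_iff] at h1
      linarith [h1.1]
    refine ⟨ε, hε0', hεle, Or.inr ?_⟩
    intro t ht
    have htI : t ∈ Icc (T - ε) T := Ico_subset_Icc_self ht
    have hΦneg : Φ t < 0 := by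
      have := hmono htI hTmem' ht.2
      rwa [hΦT0] at this
    exact ⟨hΦneg, by rw [hmax t (hsub htI) (ne_of_lt hΦneg), Real.sign_of_neg hΦneg]⟩
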